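/- Let S ⊆ ℝ^d be nonempty and convex and let x ∈ S. Then x belongs to the relative interior of S if and only if for every direction v ∈ ℝ^d with -σ_S(-v) ≠ σ_S(v), one has ⟨v, x⟩ < σ_S(v), where σ_S(v) := sup_{y∈S} ⟨v,y⟩ is the support function of S. -/

import Mathlib

open scoped RealInnerProductSpace

/-- The support function of a set, with values in the extended reals. -/
noncomputable def suppFn {d : ℕ} (S : Set (EuclideanSpace ℝ (Fin d)))
    (v : EuclideanSpace ℝ (Fin d)) : EReal :=
  ⨆ y ∈ S, ((⟪v, y⟫ : ℝ) : EReal)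

section Aux

variable {d : ℕ} {S : Set (EuclideanSpace ℝ (Fin d))}

lemma le_suppFn {v y : EuclideanSpace ℝ (Fin d)} (hy : y ∈ S) :
    ((⟪v, y⟫ : ℝ) : EReal) ≤ suppFn S v := by
  unfold suppFn
  exact le_biSup (fun y => ((⟪v, y⟫ : ℝ) : EReal)) hy

lemma exists_lt_of_ne (hS : S.Nonempty) {v : EuclideanSpace ℝ (Fin d)}
    (h : -suppFn S (-v) ≠ suppFn S v) :
    ∃ y ∈ S, ∃ z ∈ S, ⟪v, y⟫ < ⟪v, z⟫ := by
  by_contra hc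
  push_neg at hc
  obtain ⟨y0, hy0⟩ := hS
  have hconst : ∀ y ∈ S, ⟪v, y⟫ = ⟪v, y0⟫ := fun y hy =>
    le_antisymm (hc y0 hy0 y hy) (hc y hy y0 hy0)
  have h1 : suppFn S v = ((⟪v, y0⟫ : ℝ) : EReal) := by
    apply le_antisymm
    · exact iSup₂_le fun y hy => by rw [hconst y hy]
    · exact le_suppFn hy0
  have h2 : suppFn S (-v) = ((-⟪v, y0⟫ : ℝ) : EReal) := by
    apply le_antisymm
    · refine iSup₂_le fun y hy => ?_
      rw [inner_neg_left, hconst y hy]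
    · have := le_suppFn (v := -v) hy0
      rwa [inner_neg_left] at this
  apply h
  rw [h1, h2, ← EReal.coe_neg, neg_neg]

lemma ne_of_exists_lt {v : EuclideanSpace ℝ (Fin d)}
    (h : ∃ y ∈ S, ∃ z ∈ S, ⟪v, y⟫ < ⟪v, z⟫) :
    -suppFn S (-v) ≠ suppFn S v := by
  obtain ⟨y, hy, z, hz, hlt⟩ := h
  have h1 : ((⟪v, z⟫ : ℝ) : EReal) ≤ suppFn S v := le_suppFn hz
  have h2 : ((-⟪v, y⟫ : ℝ) : EReal) ≤ suppFn S (-v) := by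
    have := le_suppFn (v := -v) hy
    rwa [inner_neg_left] at this
  have h3 : -suppFn S (-v) ≤ ((⟪v, y⟫ : ℝ) : EReal) := by
    rw [EReal.neg_le]
    rw [← EReal.coe_neg]
    exact h2
  refine ne_of_lt (lt_of_le_of_lt h3 (lt_of_lt_of_le ?_ h1))
  exact_mod_cast hlt

end Aux

/-- Translation bijection between the vector span and the affine span. -/
noncomputable def spanEquiv {d : ℕ} (S : Set (EuclideanSpace ℝ (Fin d)))
    (x : EuclideanSpace ℝ (Fin d)) (hx : x ∈ S) :
    (vectorSpan ℝ S) ≃ (affineSpan ℝ S) where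
  toFun w := ⟨x + (w : EuclideanSpace ℝ (Fin d)), by
    have hx' : x ∈ affineSpan ℝ S := subset_affineSpan ℝ S hx
    have hw : (w : EuclideanSpace ℝ (Fin d)) ∈ (affineSpan ℝ S).direction := by
      rw [direction_affineSpan]; exact w.2
    have := AffineSubspace.vadd_mem_of_mem_direction hw hx'
    rwa [vadd_eq_add, add_comm] at this⟩
  invFun q := ⟨(q : EuclideanSpace ℝ (Fin d)) - x, by
    have hx' : x ∈ affineSpan ℝ S := subset_affineSpan ℝ S hx
    have h2 := AffineSubspace.vsub_mem_direction q.2 hx'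
    rw [direction_affineSpan] at h2
    rwa [vsub_eq_sub] at h2⟩
  left_inv w := by
    apply Subtype.ext
    simp
  right_inv q := by
    apply Subtype.ext
    simp

/-- Translation homeomorphism between the vector span and the affine span. -/
noncomputable def spanHomeo {d : ℕ} (S : Set (EuclideanSpace ℝ (Fin d)))
    (x : EuclideanSpace ℝ (Fin d)) (hx : x ∈ S) :
    (vectorSpan ℝ S) ≃ₜ (affineSpan ℝ S) where
  toEquiv := spanEquiv S x hx
  continuous_toFun := Continuous.subtype_mk (continuous_const.add continuous_subtype_val) _
  continuous_invFun := Continuous.subtype_mk (continuous_subtype_val.sub continuous_const) _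

lemma intrinsicInterior_eq_image {d : ℕ} {S : Set (EuclideanSpace ℝ (Fin d))}
    (x : EuclideanSpace ℝ (Fin d)) (hx : x ∈ S) :
    intrinsicInterior ℝ S =
      (fun w : vectorSpan ℝ S => x + (w : EuclideanSpace ℝ (Fin d))) ''
        interior {w : vectorSpan ℝ S | x + (w : EuclideanSpace ℝ (Fin d)) ∈ S} := by
  let φ := spanHomeo S x hx
  have h1 : interior (((↑) : affineSpan ℝ S → EuclideanSpace ℝ (Fin d)) ⁻¹' S) =
      φ '' interior (φ ⁻¹' (((↑) : affineSpan ℝ S → EuclideanSpace ℝ (Fin d)) ⁻¹' S)) := by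
    rw [φ.image_interior, φ.image_preimage]
  rw [intrinsicInterior, h1, ← Set.image_comp]
  rfl

set_option maxHeartbeats 2000000 in
/-- A point `x` of a nonempty convex set `S ⊆ ℝ^d` lies in the relative
interior of `S` iff for every direction `v` with `-σ_S(-v) ≠ σ_S(v)` one has
`⟨v, x⟩ < σ_S(v)`. -/
theorem mem_intrinsicInterior_iff_support_function
    {d : ℕ} (S : Set (EuclideanSpace ℝ (Fin d)))
    (hS : S.Nonempty) (hconv : Convex ℝ S)
    (x : EuclideanSpace ℝ (Fin d)) (hx : x ∈ S) :
    x ∈ intrinsicInterior ℝ S ↔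
      ∀ v : EuclideanSpace ℝ (Fin d),
        -suppFn S (-v) ≠ suppFn S v → ((⟪v, x⟫ : ℝ) : EReal) < suppFn S v := by
  classical
  set W := vectorSpan ℝ S with hW
  set T : Set W := {w : W | x + (w : EuclideanSpace ℝ (Fin d)) ∈ S} with hTdef
  have hbridge := intrinsicInterior_eq_image (S := S) x hx
  have hx0 : x ∈ intrinsicInterior ℝ S ↔ (0 : W) ∈ interior T := by
    rw [hbridge]
    constructor
    · rintro ⟨w, hw, hwx⟩
      have : (w : EuclideanSpace ℝ (Fin d)) = 0 := by
        have := hwx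
        rwa [add_eq_left] at this
      have hw0 : w = 0 := Subtype.ext this
      rwa [hw0] at hw
    · intro h0
      exact ⟨0, h0, by simp⟩
  constructor
  · intro hxi v hv
    obtain ⟨y, hy, z, hz, hlt⟩ := exists_lt_of_ne hS hv
    have hzle : ((⟪v, z⟫ : ℝ) : EReal) ≤ suppFn S v := le_suppFn hz
    by_cases hcase : ⟪v, x⟫ < ⟪v, z⟫
    · exact lt_of_lt_of_le (by exact_mod_cast hcase) hzle
    · push_neg at hcase
      have hyx : ⟪v, y⟫ < ⟪v, x⟫ := lt_of_lt_of_le hlt hcase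
      have h0T : (0 : W) ∈ interior T := hx0.mp hxi
      have hymem : y - x ∈ W := by
        have := vsub_mem_vectorSpan ℝ hy hx
        exact this
      set w : W := ⟨y - x, hymem⟩ with hwdef
      have hg : Continuous fun t : ℝ => (-t) • w := by continuity
      have htend : Filter.Tendsto (fun t : ℝ => (-t) • w)
          (nhdsWithin (0 : ℝ) (Set.Ioi 0)) (nhds (0 : W)) := by
        have h := (hg.tendsto 0).mono_left (nhdsWithin_le_nhds (s := Set.Ioi (0 : ℝ)))
        simpa using h
      have hev : ∀ᶠ t in nhdsWithin (0 : ℝ) (Set.Ioi 0), (-t) • w ∈ interior T := by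
        have := htend (isOpen_interior.mem_nhds h0T)
        rwa [Filter.mem_map] at this
      obtain ⟨t, hmem, htpos⟩ := (hev.and eventually_mem_nhdsWithin).exists
      have hmemT2 : (-t) • w ∈ T := interior_subset hmem
      have hTmem : x + (-t) • (y - x) ∈ S := hmemT2
      have hinner : ⟪v, x + (-t) • (y - x)⟫ = ⟪v, x⟫ + (-t) * (⟪v, y⟫ - ⟪v, x⟫) := by
        rw [inner_add_right, real_inner_smul_right, inner_sub_right]
      have htpos' : (0 : ℝ) < t := htpos
      have hgt : ⟪v, x⟫ < ⟪v, x + (-t) • (y - x)⟫ := by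
        rw [hinner]
        nlinarith
      calc ((⟪v, x⟫ : ℝ) : EReal) < ((⟪v, x + (-t) • (y - x)⟫ : ℝ) : EReal) := by
            exact_mod_cast hgt
        _ ≤ suppFn S v := le_suppFn hTmem
  · intro H
    rw [hx0]
    by_contra h0
    have hTconv : Convex ℝ T := by
      intro a ha b hb s r hs hr hsr
      show x + ((s • a + r • b : W) : EuclideanSpace ℝ (Fin d)) ∈ S
      have h1 : s • (x + (a : EuclideanSpace ℝ (Fin d))) + r • (x + (b : EuclideanSpace ℝ (Fin d)))
          = (s + r) • x + (s • (a : EuclideanSpace ℝ (Fin d)) + r • (b : EuclideanSpace ℝ (Fin d))) := by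
        rw [smul_add, smul_add, add_smul]; abel
      have h2 : x + ((s • a + r • b : W) : EuclideanSpace ℝ (Fin d)) =
          s • (x + (a : EuclideanSpace ℝ (Fin d))) + r • (x + (b : EuclideanSpace ℝ (Fin d))) := by
        rw [h1, hsr, one_smul, Submodule.coe_add, Submodule.coe_smul, Submodule.coe_smul]
      rw [h2]
      exact hconv ha hb hs hr hsr
    have h0T : (0 : W) ∈ T := by
      show x + ((0 : W) : EuclideanSpace ℝ (Fin d)) ∈ S
      simpa using hx
    -- an interior point of T
    obtain ⟨q, hq⟩ := Set.Nonempty.intrinsicInterior hconv hS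
    rw [hbridge] at hq
    obtain ⟨p, hp, -⟩ := hq
    -- separation for each n
    have hsep : ∀ n : ℕ, ∃ u : W, ‖u‖ = 1 ∧
        ∀ a ∈ T, ⟪u, a⟫ < ((n : ℝ) + 1)⁻¹ * ‖p‖ := by
      intro n
      set t : ℝ := ((n : ℝ) + 1)⁻¹ with htdef
      have htpos : (0 : ℝ) < t := by positivity
      have hz : (-t) • p ∉ closure T := by
        intro hzcl
        apply h0
        have hseg : (0 : W) ∈ openSegment ℝ p ((-t) • p) := by
          refine ⟨t / (1 + t), 1 / (1 + t), by positivity, by positivity, by field_simp; exact add_comm t 1, ?_⟩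
          rw [smul_smul]
          rw [← add_smul]
          have : t / (1 + t) + 1 / (1 + t) * -t = 0 := by field_simp; ring
          rw [this, zero_smul]
        exact hTconv.openSegment_interior_closure_subset_interior hp hzcl hseg
      obtain ⟨f, c, hfc, hcz⟩ :=
        geometric_hahn_banach_closed_point hTconv.closure isClosed_closure hz
      set v' : W := (InnerProductSpace.toDual ℝ W).symm f with hv'def
      have hfv' : ∀ a : W, f a = ⟪v', a⟫ := fun a =>
        (InnerProductSpace.toDual_symm_apply (y := f) (x := a)).symm
      have hcpos : 0 < c := by
        have := hfc 0 (subset_closure h0T)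
        simpa using this
      have hv'ne : v' ≠ 0 := by
        intro hv0
        have : f ((-t) • p) = 0 := by rw [hfv', hv0]; simp
        rw [this] at hcz
        exact absurd hcz (not_lt.mpr hcpos.le)
      have hnv' : (0 : ℝ) < ‖v'‖ := norm_pos_iff.mpr hv'ne
      refine ⟨‖v'‖⁻¹ • v', ?_, ?_⟩
      · rw [norm_smul, norm_inv, norm_norm, inv_mul_cancel₀ hnv'.ne']
      · intro a ha
        have h1 : ⟪‖v'‖⁻¹ • v', a⟫ = ‖v'‖⁻¹ * f a := by
          rw [real_inner_smul_left (F := W), hfv']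
        have h2 : f a < f ((-t) • p) := lt_trans (hfc a (subset_closure ha)) hcz
        have h3 : ⟪‖v'‖⁻¹ • v', a⟫ < ⟪‖v'‖⁻¹ • v', (-t) • p⟫ := by
          rw [h1, real_inner_smul_left (F := W), ← hfv']
          exact mul_lt_mul_of_pos_left h2 (by positivity)
        have h4 : ⟪‖v'‖⁻¹ • v', (-t) • p⟫ ≤ t * ‖p‖ := by
          rw [real_inner_smul_right (F := W)]
          have habs : |⟪‖v'‖⁻¹ • v', p⟫| ≤ ‖‖v'‖⁻¹ • v'‖ * ‖p‖ := abs_real_inner_le_norm _ _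
          have hn1 : ‖‖v'‖⁻¹ • v'‖ = 1 := by
            rw [norm_smul, norm_inv, norm_norm, inv_mul_cancel₀ hnv'.ne']
          rw [hn1, one_mul] at habs
          have : -⟪‖v'‖⁻¹ • v', p⟫ ≤ ‖p‖ := (neg_le_abs _).trans habs
          nlinarith
        exact lt_of_lt_of_le h3 h4
    choose u hu1 hu2 using hsep
    have husph : ∀ n, u n ∈ Metric.sphere (0 : W) 1 := fun n => by
      simpa [mem_sphere_iff_norm] using hu1 n
    obtain ⟨v, hvs, φ, hφ, hφconv⟩ := (isCompact_sphere (0 : W) 1).tendsto_subseq husph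
    have hvnorm : ‖v‖ = 1 := by simpa [mem_sphere_iff_norm] using hvs
    have hvle : ∀ a ∈ T, ⟪v, a⟫ ≤ 0 := by
      intro a ha
      have l1 : Filter.Tendsto (fun k => ⟪u (φ k), a⟫) Filter.atTop (nhds ⟪v, a⟫) :=
        Filter.Tendsto.inner hφconv tendsto_const_nhds
      have l2 : Filter.Tendsto (fun k => ((φ k : ℝ) + 1)⁻¹ * ‖p‖) Filter.atTop (nhds 0) := by
        have base : Filter.Tendsto (fun n : ℕ => ((n : ℝ) + 1)⁻¹) Filter.atTop (nhds 0) := by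
          simpa only [one_div] using tendsto_one_div_add_atTop_nhds_zero_nat (𝕜 := ℝ)
        have := (base.comp hφ.tendsto_atTop).mul_const ‖p‖
        simpa using this
      exact le_of_tendsto_of_tendsto' l1 l2 fun k => (hu2 (φ k) a ha).le
    set vE : EuclideanSpace ℝ (Fin d) := (v : EuclideanSpace ℝ (Fin d)) with hvE
    have hinnerW : ∀ a : W, ⟪v, a⟫ = ⟪vE, (a : EuclideanSpace ℝ (Fin d))⟫ := fun a => rfl
    have hmemT : ∀ (y) (hy : y ∈ S), (⟨y - x, vsub_mem_vectorSpan ℝ hy hx⟩ : W) ∈ T := by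
      intro y hy
      show x + (y - x) ∈ S
      simpa using hy
    have hSle : ∀ y ∈ S, ⟪vE, y⟫ ≤ ⟪vE, x⟫ := by
      intro y hy
      have := hvle _ (hmemT y hy)
      rw [hinnerW] at this
      have h5 : ⟪vE, y - x⟫ ≤ 0 := this
      rw [inner_sub_right] at h5
      linarith
    -- nonconstancy
    have hexlt : ∃ a ∈ T, ⟪v, a⟫ < 0 := by
      by_contra hc
      push_neg at hc
      have hzero : ∀ a ∈ T, ⟪v, a⟫ = 0 := fun a ha =>
        le_antisymm (hvle a ha) (hc a ha)
      have hgen : ∀ w ∈ S -ᵥ S, ⟪vE, w⟫ = 0 := by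
        rintro w ⟨y, hy, z, hz, rfl⟩
        have hy0 := hzero _ (hmemT y hy)
        have hz0 := hzero _ (hmemT z hz)
        rw [hinnerW] at hy0 hz0
        have hy0' : ⟪vE, y - x⟫ = 0 := hy0
        have hz0' : ⟪vE, z - x⟫ = 0 := hz0
        rw [inner_sub_right] at hy0' hz0'
        show ⟪vE, y - z⟫ = 0
        rw [inner_sub_right]
        linarith
      have hall : ∀ w ∈ Submodule.span ℝ (S -ᵥ S), ⟪vE, w⟫ = 0 := by
        intro w hw
        induction hw using Submodule.span_induction with
        | mem w hw => exact hgen w hw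
        | zero => simp
        | add w₁ w₂ _ _ h₁ h₂ => rw [inner_add_right, h₁, h₂, add_zero]
        | smul c w _ h => rw [real_inner_smul_right, h, mul_zero]
      have hvEW : vE ∈ Submodule.span ℝ (S -ᵥ S) := v.2
      have : ⟪vE, vE⟫ = 0 := hall vE hvEW
      have hvE0 : vE = 0 := inner_self_eq_zero.mp this
      have h10 : (1 : ℝ) = 0 := by
        rw [← hvnorm]
        show ‖vE‖ = 0
        rw [hvE0, norm_zero]
      exact one_ne_zero h10
    obtain ⟨a, haT, halt⟩ := hexlt
    have hyS : x + (a : EuclideanSpace ℝ (Fin d)) ∈ S := haT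
    have hylt : ⟪vE, x + (a : EuclideanSpace ℝ (Fin d))⟫ < ⟪vE, x⟫ := by
      rw [inner_add_right]
      have := halt
      rw [hinnerW] at this
      linarith
    have hne : -suppFn S (-vE) ≠ suppFn S vE :=
      ne_of_exists_lt ⟨_, hyS, x, hx, hylt⟩
    have hlt := H vE hne
    have hle : suppFn S vE ≤ ((⟪vE, x⟫ : ℝ) : EReal) :=
      iSup₂_le fun y hy => by exact_mod_cast hSle y hy
    exact lt_irrefl _ (lt_of_lt_of_le hlt hle)
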